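/- Reduction of Π₂-ADQBF to PDL entailment (soundness, right-to-left): let θ be a quantifier-free propositional formula over variables p₁,…,pₙ,q₁,…,q_{m+m'}, with constraint tuples c⃗ᵢ ⊆ {p₁,…,pₙ}. If for all functions f₁,…,f_m (fᵢ : {0,1}^{|c⃗ᵢ|} → {0,1}) there exist functions f_{m+1},…,f_{m+m'} such that for every assignment of p₁,…,pₙ, the assignment extended by qᵢ := fᵢ(c⃗ᵢ) for all i satisfies θ, then the set Σ = {=(c⃗ᵢ,qᵢ) : i=1,…,m} entails (in team semantics) ψ := θ ∨ =(c⃗_{m+1},q_{m+1}) ∨ … ∨ =(c⃗_{m+m'},q_{m+m'}). -/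

import Mathlib

/-- Quantifier-free propositional formulae. -/
inductive PLForm : Type
  | pos : ℕ → PLForm
  | neg : ℕ → PLForm
  | conj : PLForm → PLForm → PLForm
  | disj : PLForm → PLForm → PLForm

/-- Classical (Tarskian) single-assignment semantics. -/
def PLsatC (s : ℕ → Bool) : PLForm → Prop
  | .pos p => s p = true
  | .neg p => s p = false
  | .conj φ ψ => PLsatC s φ ∧ PLsatC s ψ
  | .disj φ ψ => PLsatC s φ ∨ PLsatC s ψ

/-- Propositional dependence logic. -/
inductive PDLForm : Type
  | pos : ℕ → PDLForm
  | neg : ℕ → PDLForm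
  | dep : List ℕ → ℕ → PDLForm
  | conj : PDLForm → PDLForm → PDLForm
  | disj : PDLForm → PDLForm → PDLForm

/-- Embedding of quantifier-free propositional formulae into PDL. -/
def toPDL : PLForm → PDLForm
  | .pos p => .pos p
  | .neg p => .neg p
  | .conj φ ψ => .conj (toPDL φ) (toPDL ψ)
  | .disj φ ψ => .disj (toPDL φ) (toPDL ψ)

/-- Team semantics for propositional dependence logic. -/
def PDLsat : Set (ℕ → Bool) → PDLForm → Prop
  | X, .pos p => ∀ s ∈ X, s p = true
  | X, .neg p => ∀ s ∈ X, s p = false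
  | X, .dep ps q => ∀ s ∈ X, ∀ s' ∈ X, ps.map s = ps.map s' → s q = s' q
  | X, .conj φ ψ => PDLsat X φ ∧ PDLsat X ψ
  | X, .disj φ ψ => ∃ Y Z, Y ∪ Z = X ∧ PDLsat Y φ ∧ PDLsat Z ψ

/-- Flatness: if every assignment in the team satisfies `θ` classically,
then the team satisfies `toPDL θ`. -/
theorem toPDL_flat : ∀ (θ : PLForm) (X : Set (ℕ → Bool)),
    (∀ s ∈ X, PLsatC s θ) → PDLsat X (toPDL θ)
  | .pos p, X, h => h
  | .neg p, X, h => h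
  | .conj φ ψ, X, h =>
    ⟨toPDL_flat φ X fun s hs => (h s hs).1, toPDL_flat ψ X fun s hs => (h s hs).2⟩
  | .disj φ ψ, X, h => by
    refine ⟨{s ∈ X | PLsatC s φ}, {s ∈ X | PLsatC s ψ}, ?_, ?_, ?_⟩
    · ext s
      constructor
      · rintro (⟨hs, _⟩ | ⟨hs, _⟩) <;> exact hs
      · intro hs
        rcases h s hs with h' | h'
        · exact Or.inl ⟨hs, h'⟩
        · exact Or.inr ⟨hs, h'⟩
    · exact toPDL_flat φ _ fun s hs => hs.2
    · exact toPDL_flat ψ _ fun s hs => hs.2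

theorem foldl_disj_sat : ∀ (L : List PDLForm) (φ : PDLForm) (Y : Set (ℕ → Bool))
    (Z : ℕ → Set (ℕ → Bool)), PDLsat Y φ →
    (∀ j, (hj : j < L.length) → PDLsat (Z j) L[j]) →
    PDLsat (Y ∪ ⋃ j ∈ Set.Iio L.length, Z j) (L.foldl PDLForm.disj φ)
  | [], φ, Y, Z, hY, _ => by
    have : (Y ∪ ⋃ j ∈ Set.Iio (List.length ([] : List PDLForm)), Z j) = Y := by
      simp
    rw [List.foldl_nil, this]; exact hY
  | a :: L, φ, Y, Z, hY, hZ => by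
    have h0 : PDLsat (Y ∪ Z 0) (PDLForm.disj φ a) :=
      ⟨Y, Z 0, rfl, hY, hZ 0 (Nat.succ_pos _)⟩
    have hrec := foldl_disj_sat L (PDLForm.disj φ a) (Y ∪ Z 0) (fun j => Z (j + 1)) h0
      (fun j hj => by exact hZ (j + 1) (Nat.succ_lt_succ hj))
    have hset : ((Y ∪ Z 0) ∪ ⋃ j ∈ Set.Iio L.length, Z (j + 1))
        = Y ∪ ⋃ j ∈ Set.Iio (a :: L).length, Z j := by
      ext s
      simp only [Set.mem_union, Set.mem_iUnion, Set.mem_Iio, List.length_cons]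
      constructor
      · rintro ((h | h) | ⟨j, hj, h⟩)
        · exact Or.inl h
        · exact Or.inr ⟨0, Nat.succ_pos _, h⟩
        · exact Or.inr ⟨j + 1, Nat.succ_lt_succ hj, h⟩
      · rintro (h | ⟨j, hj, h⟩)
        · exact Or.inl (Or.inl h)
        · cases j with
          | zero => exact Or.inl (Or.inr h)
          | succ j => exact Or.inr ⟨j, Nat.lt_of_succ_lt_succ hj, h⟩
    rw [List.foldl_cons]
    rw [hset] at hrec
    exact hrec

/-- Soundness (right-to-left) of the reduction of `Π₂-ADQBF` to PDL entailment:
if for all Skolem functions `f` for the universally quantified function variables there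
are Skolem functions `g` for the existentially quantified ones such that every assignment
consistent with `f` and `g` satisfies `θ`, then
`{=(c⃗ᵢ,qᵢ) : i < m} ⊨ θ ∨ =(d⃗₁,r₁) ∨ … ∨ =(d⃗_{m'},r_{m'})`. -/
theorem pi2adqbf_to_pdl_entailment (m m' : ℕ) (θ : PLForm)
    (cs : Fin m → List ℕ) (qs : Fin m → ℕ)
    (ds : Fin m' → List ℕ) (rs : Fin m' → ℕ)
    (hinj : Function.Injective (Sum.elim qs rs : Fin m ⊕ Fin m' → ℕ))
    (hfresh : ∀ k : Fin m ⊕ Fin m',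
      (∀ i, Sum.elim qs rs k ∉ cs i) ∧ (∀ j, Sum.elim qs rs k ∉ ds j))
    (htrue : ∀ f : Fin m → (List Bool → Bool), ∃ g : Fin m' → (List Bool → Bool),
      ∀ s : ℕ → Bool,
        (∀ i, s (qs i) = f i ((cs i).map s)) →
        (∀ j, s (rs j) = g j ((ds j).map s)) →
        PLsatC s θ) :
    ∀ X : Set (ℕ → Bool),
      (∀ i : Fin m, PDLsat X (.dep (cs i) (qs i))) →
      PDLsat X ((List.ofFn fun j : Fin m' => PDLForm.dep (ds j) (rs j)).foldl
        PDLForm.disj (toPDL θ)) := by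
  classical
  intro X hdep
  -- extract Skolem functions for the universally quantified function variables from X
  set f : Fin m → List Bool → Bool := fun i v =>
    if h : ∃ s, s ∈ X ∧ (cs i).map s = v then h.choose (qs i) else false with hf_def
  have hf : ∀ s ∈ X, ∀ i, s (qs i) = f i ((cs i).map s) := by
    intro s hs i
    have hex : ∃ s', s' ∈ X ∧ (cs i).map s' = (cs i).map s := ⟨s, hs, rfl⟩
    rw [hf_def]
    simp only [dif_pos hex]
    obtain ⟨hmem, heq⟩ := hex.choose_spec
    exact hdep i s hs hex.choose hmem heq.symm
  obtain ⟨g, hg⟩ := htrue f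
  set Y : Set (ℕ → Bool) :=
    {s | s ∈ X ∧ ∀ j, s (rs j) = g j ((ds j).map s)} with hY_def
  set Z : ℕ → Set (ℕ → Bool) := fun j =>
    {s | s ∈ X ∧ ∃ h : j < m', s (rs ⟨j, h⟩) ≠ g ⟨j, h⟩ ((ds ⟨j, h⟩).map s)} with hZ_def
  set L : List PDLForm := List.ofFn fun j : Fin m' => PDLForm.dep (ds j) (rs j) with hL_def
  have hlen : L.length = m' := by simp [hL_def]
  have hX : X = Y ∪ ⋃ j ∈ Set.Iio L.length, Z j := by
    ext s
    simp only [Set.mem_union, Set.mem_iUnion, Set.mem_Iio, hlen, hY_def, hZ_def,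
      Set.mem_setOf_eq]
    constructor
    · intro hs
      by_cases hall : ∀ j, s (rs j) = g j ((ds j).map s)
      · exact Or.inl ⟨hs, hall⟩
      · push_neg at hall
        obtain ⟨j, hj⟩ := hall
        exact Or.inr ⟨j.1, j.2, hs, j.2, hj⟩
    · rintro (⟨hs, _⟩ | ⟨j, hj, hs, _⟩) <;> exact hs
  rw [hX]
  apply foldl_disj_sat
  · apply toPDL_flat
    rintro s ⟨hs, hgs⟩
    exact hg s (hf s hs) hgs
  · intro j hj
    have hj' : j < m' := hlen ▸ hj
    have : L[j] = PDLForm.dep (ds ⟨j, hj'⟩) (rs ⟨j, hj'⟩) := by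
      simp [hL_def, List.getElem_ofFn]
    rw [this]
    rintro s ⟨hs, h1, hne⟩ s' ⟨hs', h1', hne'⟩ hmap
    have hgv : g ⟨j, hj'⟩ ((ds ⟨j, hj'⟩).map s) = g ⟨j, hj'⟩ ((ds ⟨j, hj'⟩).map s') := by
      rw [hmap]
    rw [← hgv] at hne'
    cases hb : g ⟨j, hj'⟩ ((ds ⟨j, hj'⟩).map s) <;> rw [hb] at hne hne' <;>
      simp only [ne_eq, Bool.not_eq_false, Bool.not_eq_true] at hne hne' <;>
      rw [hne, hne']
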